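/- Let A ⊆ {1,...,N} be a B₂ set with |A| = k, m a positive integer, and a(x) = |{a ∈ A : a ≡ x mod m}|. Then ∑_{x ∈ ZMod m} (a(x) - k/m)² ≤ k + 2N/m - k²/m. -/

import Mathlib

theorem stmt_9 (N m : ℕ) [NeZero m] (A : Finset ℕ)
    (hA : A ⊆ Finset.Icc 1 N)
    (hB2 : ∀ a ∈ A, ∀ b ∈ A, ∀ c ∈ A, ∀ d ∈ A,
      b ≤ a → d ≤ c → a + b = c + d → a = c ∧ b = d)
    (k : ℕ) (hk : A.card = k)
    (a : ZMod m → ℕ)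
    (ha : ∀ x : ZMod m, a x = (A.filter (fun n => ((n : ℕ) : ZMod m) = x)).card) :
    (∑ x : ZMod m, ((a x : ℝ) - k / m) ^ 2) ≤ k + 2 * N / m - (k : ℝ) ^ 2 / m := by
  classical
  have hmpos : 0 < m := NeZero.pos m
  have hmR : (0:ℝ) < (m:ℝ) := by exact_mod_cast hmpos
  -- sum of a = k
  have hsumN : ∑ x : ZMod m, a x = k := by
    rw [← hk]
    simp only [ha]
    exact (Finset.card_eq_sum_card_fiberwise
      (f := fun n : ℕ => ((n : ℕ) : ZMod m)) (t := Finset.univ)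
      (fun x _ => Finset.mem_univ _)).symm
  -- pairs with equal classes
  set P : Finset (ℕ × ℕ) :=
    (A ×ˢ A).filter (fun p => ((p.1 : ℕ) : ZMod m) = ((p.2 : ℕ) : ZMod m)) with hP
  have hPcard : P.card = ∑ x : ZMod m, a x * a x := by
    rw [Finset.card_eq_sum_card_fiberwise
      (f := fun p : ℕ × ℕ => ((p.1 : ℕ) : ZMod m)) (t := Finset.univ)
      (fun x _ => Finset.mem_univ _)]
    refine Finset.sum_congr rfl fun x _ => ?_
    have : P.filter (fun p : ℕ × ℕ => ((p.1 : ℕ) : ZMod m) = x)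
        = (A.filter (fun n => ((n : ℕ) : ZMod m) = x)) ×ˢ
          (A.filter (fun n => ((n : ℕ) : ZMod m) = x)) := by
      ext p
      simp only [hP, Finset.mem_filter, Finset.mem_product]
      constructor
      · rintro ⟨⟨⟨h1, h2⟩, h3⟩, h4⟩
        exact ⟨⟨h1, h4⟩, h2, h3 ▸ h4⟩
      · rintro ⟨⟨h1, h2⟩, h3, h4⟩
        exact ⟨⟨⟨h1, h3⟩, h2.trans h4.symm⟩, h2⟩
    rw [this, Finset.card_product, ha]
  -- strict pairs
  set T : Finset (ℕ × ℕ) := P.filter (fun p => p.2 < p.1) with hT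
  have hDiag : (P.filter (fun p : ℕ × ℕ => p.1 = p.2)).card = k := by
    rw [← hk]
    have : P.filter (fun p : ℕ × ℕ => p.1 = p.2) = A.image (fun n => (n, n)) := by
      ext p
      simp only [hP, Finset.mem_filter, Finset.mem_product, Finset.mem_image]
      constructor
      · rintro ⟨⟨⟨h1, h2⟩, h3⟩, h4⟩
        exact ⟨p.1, h1, by rw [show p = (p.1, p.2) from rfl, h4]⟩
      · rintro ⟨n, hn, rfl⟩
        exact ⟨⟨⟨hn, hn⟩, rfl⟩, rfl⟩
    rw [this, Finset.card_image_of_injective _ (fun x y h => (Prod.mk.injEq _ _ _ _ ▸ h).1)]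
  have hSwap : (P.filter (fun p : ℕ × ℕ => p.1 < p.2)).card = T.card := by
    have : P.filter (fun p : ℕ × ℕ => p.1 < p.2) = T.image Prod.swap := by
      ext p
      simp only [hT, hP, Finset.mem_filter, Finset.mem_product, Finset.mem_image]
      constructor
      · rintro ⟨⟨⟨h1, h2⟩, h3⟩, h4⟩
        exact ⟨p.swap, ⟨⟨⟨h2, h1⟩, h3.symm⟩, h4⟩, Prod.swap_swap p⟩
      · rintro ⟨q, ⟨⟨⟨h1, h2⟩, h3⟩, h4⟩, rfl⟩
        exact ⟨⟨⟨h2, h1⟩, h3.symm⟩, h4⟩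
    rw [this, Finset.card_image_of_injective _ Prod.swap_injective]
  have hSplit : P.card = k + 2 * T.card := by
    have h1 := Finset.card_filter_add_card_filter_not
      (s := P) (p := fun p : ℕ × ℕ => p.1 = p.2)
    have h2 := Finset.card_filter_add_card_filter_not
      (s := P.filter (fun p : ℕ × ℕ => ¬ p.1 = p.2)) (p := fun p : ℕ × ℕ => p.2 < p.1)
    have e1 : (P.filter (fun p : ℕ × ℕ => ¬ p.1 = p.2)).filter (fun p => p.2 < p.1) = T := by
      rw [hT, Finset.filter_filter]
      exact Finset.filter_congr (fun p _ => by constructor <;> intro h <;> omega)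
    have e2 : (P.filter (fun p : ℕ × ℕ => ¬ p.1 = p.2)).filter (fun p => ¬ p.2 < p.1)
        = P.filter (fun p : ℕ × ℕ => p.1 < p.2) := by
      rw [Finset.filter_filter]
      exact Finset.filter_congr (fun p _ => by constructor <;> intro h <;> omega)
    rw [e1, e2, hSwap] at h2
    omega
  -- T.card ≤ N / m via injectivity of differences
  have hTle : T.card ≤ N / m := by
    have := Finset.card_le_card_of_injOn (f := fun p : ℕ × ℕ => p.1 - p.2)
      (s := T) (t := (Finset.Ioc 0 N).filter (m ∣ ·)) ?_ ?_
    · rwa [Nat.Ioc_filter_dvd_card_eq_div] at this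
    · rintro ⟨u, v⟩ hp
      simp only [hT, hP, Finset.mem_coe, Finset.mem_filter, Finset.mem_product] at hp
      obtain ⟨⟨⟨hu, hv⟩, hcls⟩, hlt⟩ := hp
      have hu' := hA hu
      have hv' := hA hv
      simp only [Finset.mem_Icc] at hu' hv'
      have hdvd : m ∣ u - v := by
        have := (ZMod.natCast_eq_natCast_iff u v m).mp hcls
        exact (Nat.modEq_iff_dvd' (le_of_lt hlt)).mp this.symm
      simp only [Finset.mem_coe, Finset.mem_filter, Finset.mem_Ioc]
      exact ⟨⟨by omega, by omega⟩, hdvd⟩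
    · rintro ⟨u, v⟩ hp ⟨u', v'⟩ hp' heq
      simp only [hT, hP, Finset.coe_filter, Set.mem_setOf_eq, Finset.mem_filter,
        Finset.mem_product] at hp hp'
      obtain ⟨⟨⟨hu, hv⟩, _⟩, hlt⟩ := hp
      obtain ⟨⟨⟨hu', hv'⟩, _⟩, hlt'⟩ := hp'
      simp only at heq
      have hsum : u + v' = u' + v := by omega
      have hmax : max u v' ∈ A := by
        rcases max_choice u v' with h | h <;> rw [h] <;> assumption
      have hmax' : max u' v ∈ A := by
        rcases max_choice u' v with h | h <;> rw [h] <;> assumption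
      have hmin : min u v' ∈ A := by
        rcases min_choice u v' with h | h <;> rw [h] <;> assumption
      have hmin' : min u' v ∈ A := by
        rcases min_choice u' v with h | h <;> rw [h] <;> assumption
      have := hB2 (max u v') hmax (min u v') hmin (max u' v) hmax' (min u' v) hmin'
        (min_le_max) (min_le_max)
        (by rw [max_add_min, max_add_min]; omega)
      obtain ⟨e1, e2⟩ := this
      have : u = u' ∧ v = v' := by omega
      simp [Prod.ext_iff, this.1, this.2]
  -- pass to reals
  have hsumR : ∑ x : ZMod m, (a x : ℝ) = k := by exact_mod_cast hsumN
  have hsq : ∑ x : ZMod m, (a x : ℝ) ^ 2 ≤ (k : ℝ) + 2 * N / m := by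
    have h1 : ∑ x : ZMod m, (a x : ℝ) ^ 2 = ((∑ x : ZMod m, a x * a x : ℕ) : ℝ) := by
      push_cast; refine Finset.sum_congr rfl fun x _ => by ring
    rw [h1, ← hPcard, hSplit]
    have h2 : ((N / m : ℕ) : ℝ) ≤ (N : ℝ) / m := Nat.cast_div_le
    have h3 : ((T.card : ℕ) : ℝ) ≤ (N : ℝ) / m := le_trans (by exact_mod_cast hTle) h2
    push_cast
    rw [mul_div_assoc]
    linarith [h3]
  -- final algebra
  have hcard : (Finset.univ : Finset (ZMod m)).card = m := ZMod.card m
  have expand : ∑ x : ZMod m, ((a x : ℝ) - k / m) ^ 2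
      = (∑ x : ZMod m, (a x : ℝ) ^ 2) - (k : ℝ) ^ 2 / m := by
    have : ∑ x : ZMod m, ((a x : ℝ) - k / m) ^ 2
        = (∑ x : ZMod m, (a x : ℝ) ^ 2) - 2 * ((k:ℝ)/m) * (∑ x : ZMod m, (a x : ℝ))
          + (Finset.univ : Finset (ZMod m)).card * ((k:ℝ)/m)^2 := by
      rw [Finset.sum_congr rfl (fun x _ => by ring :
        ∀ x ∈ (Finset.univ : Finset (ZMod m)), ((a x : ℝ) - k / m) ^ 2
          = (a x : ℝ)^2 - 2 * ((k:ℝ)/m) * (a x : ℝ) + ((k:ℝ)/m)^2)]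
      rw [Finset.sum_add_distrib, Finset.sum_sub_distrib, ← Finset.mul_sum,
        Finset.sum_const, nsmul_eq_mul]
    rw [this, hsumR, hcard]
    field_simp
    ring
  rw [expand]
  linarith [hsq]
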